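/- The eigenspaces of the Berezin transform are invariant under complex conjugation: if θ ∈ ℂ, g : Fin n × Fin n → ℂ, g ≠ 0, and D_u g = θ • C_u g (i.e. g is an eigenfunction of I_u = C_u⁻¹ ∘ D_u with eigenvalue θ), then |θ| = 1 and D_u (conj g) = θ • C_u (conj g). -/

import Mathlib

open Finset Matrix

/-- The symbol-to-operator map `C_u`. -/
noncomputable def Cmap {ι : Type*} [Fintype ι] (u : Matrix ι ι ℂ) (f : ι × ι → ℂ) :
    Matrix ι ι ℂ :=
  fun k k' => ∑ l, u k l * f (k, l) * (starRingEnd ℂ) (u k' l)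

/-- The symbol-to-operator map `D_u`. -/
noncomputable def Dmap {ι : Type*} [Fintype ι] (u : Matrix ι ι ℂ) (f : ι × ι → ℂ) :
    Matrix ι ι ℂ :=
  fun k k' => ∑ l, u k l * f (k', l) * (starRingEnd ℂ) (u k' l)

/-- the eigenspaces of the Berezin transform `I_u = C_u⁻¹ ∘ D_u` are invariant
under complex conjugation; moreover every eigenvalue has modulus 1. The eigenvalue equation
`I_u g = θ g` is expressed as `D_u g = θ • C_u g`. -/
theorem stmt4 (n : ℕ) (hn : 1 ≤ n) (u : Matrix (Fin n) (Fin n) ℂ)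
    (hu : u * uᴴ = 1) (hne : ∀ k l, u k l ≠ 0) (θ : ℂ) (g : Fin n × Fin n → ℂ)
    (hg : g ≠ 0) (heig : Dmap u g = θ • Cmap u g) :
    ‖θ‖ = 1 ∧
      Dmap u (fun p => (starRingEnd ℂ) (g p)) =
        θ • Cmap u (fun p => (starRingEnd ℂ) (g p)) := by
  classical
  have hu' : uᴴ * u = 1 := mul_eq_one_comm.mp hu
  have hcol : ∀ l m : Fin n, (∑ k, (starRingEnd ℂ) (u k l) * u k m) =
      if l = m then 1 else 0 := by
    intro l m
    have h := congrFun (congrFun hu' l) m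
    simpa [Matrix.mul_apply, Matrix.conjTranspose_apply, Matrix.one_apply] using h
  have hcol2 : ∀ l m : Fin n, (∑ k, u k l * (starRingEnd ℂ) (u k m)) =
      if l = m then 1 else 0 := by
    intro l m
    have h : (∑ k, u k l * (starRingEnd ℂ) (u k m)) =
        (starRingEnd ℂ) (∑ k, (starRingEnd ℂ) (u k l) * u k m) := by
      rw [map_sum]
      exact Finset.sum_congr rfl fun k _ => by
        rw [_root_.map_mul, Complex.conj_conj]
    rw [h, hcol]
    split <;> simp
  -- the common weighted norm
  set W : ℂ := ∑ k, ∑ l, (u k l * (starRingEnd ℂ) (u k l)) *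
      (g (k, l) * (starRingEnd ℂ) (g (k, l))) with hWdef
  have sumC : ∑ k, ∑ k', Cmap u g k k' * (starRingEnd ℂ) (Cmap u g k k') = W := by
    refine Finset.sum_congr rfl fun k _ => ?_
    calc ∑ k', Cmap u g k k' * (starRingEnd ℂ) (Cmap u g k k')
        = ∑ k', ∑ l, ∑ m,
            (u k l * g (k, l) * ((starRingEnd ℂ) (u k m) * (starRingEnd ℂ) (g (k, m)))) *
              ((starRingEnd ℂ) (u k' l) * u k' m) := by
          refine Finset.sum_congr rfl fun k' _ => ?_
          simp only [Cmap, map_sum, _root_.map_mul, Finset.sum_mul_sum]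
          exact Finset.sum_congr rfl fun l _ => Finset.sum_congr rfl fun m _ => by
            simp only [Complex.conj_conj]; ring
      _ = ∑ l, ∑ m,
            (u k l * g (k, l) * ((starRingEnd ℂ) (u k m) * (starRingEnd ℂ) (g (k, m)))) *
              ∑ k', (starRingEnd ℂ) (u k' l) * u k' m := by
          rw [Finset.sum_comm]
          refine Finset.sum_congr rfl fun l _ => ?_
          rw [Finset.sum_comm]
          exact Finset.sum_congr rfl fun m _ => (Finset.mul_sum _ _ _).symm
      _ = ∑ l, (u k l * (starRingEnd ℂ) (u k l)) * (g (k, l) * (starRingEnd ℂ) (g (k, l))) := by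
          simp only [hcol, mul_ite, mul_one, mul_zero, Finset.sum_ite_eq, Finset.mem_univ,
            if_true]
          exact Finset.sum_congr rfl fun l _ => by ring
  have sumD : ∑ k, ∑ k', Dmap u g k k' * (starRingEnd ℂ) (Dmap u g k k') = W := by
    rw [Finset.sum_comm, hWdef]
    refine Finset.sum_congr rfl fun k' _ => ?_
    calc ∑ k, Dmap u g k k' * (starRingEnd ℂ) (Dmap u g k k')
        = ∑ k, ∑ l, ∑ m,
            (g (k', l) * (starRingEnd ℂ) (u k' l) *
              ((starRingEnd ℂ) (g (k', m)) * u k' m)) *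
              (u k l * (starRingEnd ℂ) (u k m)) := by
          refine Finset.sum_congr rfl fun k _ => ?_
          simp only [Dmap, map_sum, _root_.map_mul, Finset.sum_mul_sum]
          exact Finset.sum_congr rfl fun l _ => Finset.sum_congr rfl fun m _ => by
            simp only [Complex.conj_conj]; ring
      _ = ∑ l, ∑ m,
            (g (k', l) * (starRingEnd ℂ) (u k' l) *
              ((starRingEnd ℂ) (g (k', m)) * u k' m)) *
              ∑ k, u k l * (starRingEnd ℂ) (u k m) := by
          rw [Finset.sum_comm]
          refine Finset.sum_congr rfl fun l _ => ?_
          rw [Finset.sum_comm]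
          exact Finset.sum_congr rfl fun m _ => (Finset.mul_sum _ _ _).symm
      _ = ∑ l, (u k' l * (starRingEnd ℂ) (u k' l)) *
            (g (k', l) * (starRingEnd ℂ) (g (k', l))) := by
          simp only [hcol2, mul_ite, mul_one, mul_zero, Finset.sum_ite_eq, Finset.mem_univ,
            if_true]
          exact Finset.sum_congr rfl fun l _ => by ring
  -- W = θ * conj θ * W
  have hDth : ∑ k, ∑ k', Dmap u g k k' * (starRingEnd ℂ) (Dmap u g k k') =
      (θ * (starRingEnd ℂ) θ) * ∑ k, ∑ k', Cmap u g k k' * (starRingEnd ℂ) (Cmap u g k k') := by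
    rw [heig]
    simp only [Finset.mul_sum]
    refine Finset.sum_congr rfl fun k _ => Finset.sum_congr rfl fun k' _ => ?_
    simp only [Matrix.smul_apply, smul_eq_mul, _root_.map_mul]
    ring
  have hWW : W = (θ * (starRingEnd ℂ) θ) * W := by
    calc W = ∑ k, ∑ k', Dmap u g k k' * (starRingEnd ℂ) (Dmap u g k k') := sumD.symm
      _ = (θ * (starRingEnd ℂ) θ) *
            ∑ k, ∑ k', Cmap u g k k' * (starRingEnd ℂ) (Cmap u g k k') := hDth
      _ = (θ * (starRingEnd ℂ) θ) * W := by rw [sumC]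
  -- W is a positive real
  have hWre : W = ((∑ k, ∑ l, Complex.normSq (u k l) * Complex.normSq (g (k, l)) : ℝ) : ℂ) := by
    rw [hWdef]
    push_cast
    exact Finset.sum_congr rfl fun k _ => Finset.sum_congr rfl fun l _ => by
      rw [Complex.mul_conj, Complex.mul_conj]
  obtain ⟨p, hp⟩ : ∃ p, g p ≠ 0 := by
    by_contra h
    push_neg at h
    exact hg (funext h)
  have hwpos : 0 < ∑ k, ∑ l, Complex.normSq (u k l) * Complex.normSq (g (k, l)) := by
    refine Finset.sum_pos' (fun k _ => Finset.sum_nonneg fun l _ =>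
      mul_nonneg (Complex.normSq_nonneg _) (Complex.normSq_nonneg _)) ⟨p.1, Finset.mem_univ _, ?_⟩
    refine Finset.sum_pos' (fun l _ =>
      mul_nonneg (Complex.normSq_nonneg _) (Complex.normSq_nonneg _))
      ⟨p.2, Finset.mem_univ _, mul_pos (Complex.normSq_pos.mpr (hne p.1 p.2))
        (Complex.normSq_pos.mpr (by simpa using hp))⟩
  have hWne : W ≠ 0 := by
    rw [hWre]
    exact_mod_cast ne_of_gt hwpos
  have hθ : θ * (starRingEnd ℂ) θ = 1 :=
    mul_right_cancel₀ hWne (by rw [one_mul]; exact hWW.symm)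
  have habs : ‖θ‖ = 1 := by
    have h1 : (Complex.normSq θ : ℂ) = 1 := by rw [← Complex.mul_conj, hθ]
    have h2 : Complex.normSq θ = 1 := by exact_mod_cast h1
    rw [Complex.norm_def, h2, Real.sqrt_one]
  refine ⟨habs, ?_⟩
  ext k k'
  have hE : Dmap u g k' k = θ * Cmap u g k' k := by
    have := congrFun (congrFun heig k') k
    simpa [Matrix.smul_apply, smul_eq_mul] using this
  have P1 : Dmap u (fun p => (starRingEnd ℂ) (g p)) k k' =
      (starRingEnd ℂ) (Cmap u g k' k) := by
    simp only [Dmap, Cmap, map_sum, _root_.map_mul, Complex.conj_conj]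
    exact Finset.sum_congr rfl fun l _ => by ring
  have P2 : Cmap u (fun p => (starRingEnd ℂ) (g p)) k k' =
      (starRingEnd ℂ) (Dmap u g k' k) := by
    simp only [Dmap, Cmap, map_sum, _root_.map_mul, Complex.conj_conj]
    exact Finset.sum_congr rfl fun l _ => by ring
  rw [Matrix.smul_apply, smul_eq_mul, P1, P2, hE, _root_.map_mul, ← mul_assoc, hθ, one_mul]
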